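/- The equivariant Schubert classes form a basis: the classes S̃_λ, λ ranging over binary strings of length n with k ones, form a free module basis of the ring of GKM classes over ℤ[y_1,...,y_n]. Moreover any class α can be written uniquely as a ℤ[y_1,...,y_n]-linear combination of the S̃_λ using only λ such that λ ≥ μ for some μ in the support of α. -/

import Mathlib

def ones (n : ℕ) (l : Fin n → Bool) : ℕ :=
  (Finset.univ.filter (fun i => l i = true)).card

def invCount (n : ℕ) (l : Fin n → Bool) : ℕ :=
  (Finset.univ.filter (fun p : Fin n × Fin n =>
    p.1 < p.2 ∧ l p.1 = true ∧ l p.2 = false)).card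

def psum (n : ℕ) (l : Fin n → Bool) (j : ℕ) : ℕ :=
  (Finset.univ.filter (fun i : Fin n => i.val < j ∧ l i = true)).card

/-- dominance order: `domLE n l l'` means `l ≤ l'`. -/
def domLE (n : ℕ) (l l' : Fin n → Bool) : Prop :=
  ∀ j : ℕ, psum n l j ≤ psum n l' j

/-- the identity string `0^{n-k} 1^k`. -/
def idStr (n k : ℕ) : Fin n → Bool := fun i => decide (n - k ≤ i.val)

/-- the divisor string `0^{n-k-1} 1 0 1^{k-1}`. -/
def dvStr (n k : ℕ) : Fin n → Bool :=
  fun i => decide (i.val = n - k - 1 ∨ n - k + 1 ≤ i.val)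

open MvPolynomial

noncomputable def invProd (n : ℕ) (l : Fin n → Bool) : MvPolynomial (Fin n) ℤ :=
  ∏ p ∈ Finset.univ.filter (fun p : Fin n × Fin n =>
      p.1 < p.2 ∧ l p.1 = true ∧ l p.2 = false), (X p.2 - X p.1)

/-- the GKM condition for a tuple of polynomials indexed by binary strings
(imposed on the strings with `k` ones). -/
def IsGKM (n k : ℕ) (α : (Fin n → Bool) → MvPolynomial (Fin n) ℤ) : Prop :=
  ∀ l : Fin n → Bool, ones n l = k → ∀ i j : Fin n,
    (X i - X j : MvPolynomial (Fin n) ℤ) ∣ (α l - α (l ∘ Equiv.swap i j))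

/-- `α` is supported above `l` in dominance order. -/
def SuppAbove (n k : ℕ) (α : (Fin n → Bool) → MvPolynomial (Fin n) ℤ)
    (l : Fin n → Bool) : Prop :=
  ∀ m : Fin n → Bool, ones n m = k → α m ≠ 0 → domLE n l m

/-- `S` is a family of equivariant Schubert classes. -/
def IsSchubertFamily (n k : ℕ)
    (S : (Fin n → Bool) → (Fin n → Bool) → MvPolynomial (Fin n) ℤ) : Prop :=
  ∀ l : Fin n → Bool, ones n l = k →
    IsGKM n k (S l) ∧ SuppAbove n k (S l) l ∧ S l l = invProd n l ∧
    ∀ m : Fin n → Bool, (S l m).IsHomogeneous (invCount n l)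

instance (n k : ℕ) : DecidablePred (fun l : Fin n → Bool => ones n l = k) :=
  fun _ => Nat.decEq _ _

section AuxLemmas
open Finset

lemma domLE_refl (n : ℕ) (l : Fin n → Bool) : domLE n l l := fun _ => le_refl _

lemma domLE_trans {n : ℕ} {l l' l'' : Fin n → Bool} (h : domLE n l l')
    (h' : domLE n l' l'') : domLE n l l'' := fun j => le_trans (h j) (h' j)

lemma psum_succ {n : ℕ} (l : Fin n → Bool) (i : Fin n) :
    psum n l (i.val + 1) = psum n l i.val + (if l i = true then 1 else 0) := by
  unfold _root_.psum
  by_cases h : l i = true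
  · rw [if_pos h]
    have he : (univ.filter fun p : Fin n => p.val < i.val + 1 ∧ l p = true)
        = insert i (univ.filter fun p : Fin n => p.val < i.val ∧ l p = true) := by
      ext p
      simp only [mem_insert, mem_filter, mem_univ, true_and]
      constructor
      · rintro ⟨hp, hlp⟩
        rcases Nat.lt_succ_iff_lt_or_eq.mp hp with h' | h'
        · exact Or.inr ⟨h', hlp⟩
        · exact Or.inl (Fin.ext h')
      · rintro (rfl | ⟨hp, hlp⟩)
        · exact ⟨Nat.lt_succ_self _, h⟩
        · exact ⟨Nat.lt_succ_of_lt hp, hlp⟩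
    rw [he, card_insert_of_notMem (by simp)]
  · rw [if_neg h, add_zero]
    congr 1
    ext p
    simp only [mem_filter, mem_univ, true_and]
    constructor
    · rintro ⟨hp, hlp⟩
      refine ⟨?_, hlp⟩
      rcases Nat.lt_succ_iff_lt_or_eq.mp hp with h' | h'
      · exact h'
      · exact absurd hlp (by rw [Fin.ext h']; exact h)
    · rintro ⟨hp, hlp⟩
      exact ⟨Nat.lt_succ_of_lt hp, hlp⟩

lemma domLE_antisymm {n : ℕ} {l l' : Fin n → Bool} (h : domLE n l l')
    (h' : domLE n l' l) : l = l' := by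
  have hp : ∀ j, psum n l j = psum n l' j := fun j => le_antisymm (h j) (h' j)
  funext i
  have e1 := psum_succ l i
  have e2 := psum_succ l' i
  rw [hp (i.val + 1), e2, hp i.val] at e1
  have e3 : (if l i = true then 1 else 0) = (if l' i = true then 1 else 0) :=
    Nat.add_left_cancel e1.symm
  by_cases hb : l i = true <;> by_cases hb' : l' i = true <;>
    simp_all [Bool.not_eq_true]

lemma exists_min {n k : ℕ} :
    ∀ (N : ℕ) (s : Finset {l : Fin n → Bool // ones n l = k}), s.card ≤ N → s.Nonempty →
    ∃ x ∈ s, ∀ y ∈ s, domLE n y.val x.val → y = x := by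
  intro N
  induction N with
  | zero =>
    intro s hc hne
    rw [Nat.le_zero, Finset.card_eq_zero] at hc
    exact absurd hc hne.ne_empty
  | succ N ih =>
    intro s hc hne
    classical
    obtain ⟨x, hx⟩ := hne
    by_cases h : ∃ y ∈ s, domLE n y.val x.val ∧ y ≠ x
    · obtain ⟨y, hy, hyx, hyne⟩ := h
      set t := s.filter (fun z => domLE n z.val x.val ∧ z ≠ x) with ht
      have hts : t ⊆ s := filter_subset _ _
      have hxt : x ∉ t := by simp [ht]
      have htc : t.card ≤ N := by
        have : t.card < s.card := card_lt_card ⟨hts, fun hsub => hxt (hsub hx)⟩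
        omega
      obtain ⟨m, hm, hmin⟩ := ih t htc ⟨y, by simp [ht, hy, hyx, hyne]⟩
      have hmx : domLE n m.val x.val ∧ m ≠ x := (mem_filter.mp hm).2
      refine ⟨m, hts hm, ?_⟩
      intro z hz hzm
      by_contra hne2
      have hzx : domLE n z.val x.val := domLE_trans hzm hmx.1
      have hzxne : z ≠ x := by
        rintro rfl
        exact hmx.2 (Subtype.ext (domLE_antisymm hmx.1 hzm))
      exact hne2 (hmin z (mem_filter.mpr ⟨hz, hzx, hzxne⟩) hzm)
    · push_neg at h
      exact ⟨x, hx, h⟩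

lemma prime_X_sub_X {n : ℕ} {i j : Fin n} (h : i ≠ j) :
    Prime (X j - X i : MvPolynomial (Fin n) ℤ) := by
  classical
  let e := (Equiv.optionSubtypeNe j).symm
  let φ := (renameEquiv ℤ e).trans (optionEquivLeft ℤ {b : Fin n // b ≠ j})
  rw [← MulEquiv.prime_iff φ.toMulEquiv]
  have h1 : φ.toMulEquiv (X j - X i) = Polynomial.X - Polynomial.C (X ⟨i, h⟩) := by
    show φ (X j - X i) = _
    have hj : e j = none := Equiv.optionSubtypeNe_symm_self j
    have hi : e i = some ⟨i, h⟩ := Equiv.optionSubtypeNe_symm_of_ne h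
    simp [φ, map_sub, renameEquiv_apply, rename_X, hj, hi,
      optionEquivLeft_X_none, optionEquivLeft_X_some]
  rw [h1]
  exact Polynomial.prime_X_sub_C _

lemma not_dvd_X_sub_X {n : ℕ} {i j i' j' : Fin n} (hij : i < j) (hij' : i' < j')
    (hne : (i, j) ≠ (i', j')) :
    ¬ (X j - X i : MvPolynomial (Fin n) ℤ) ∣ (X j' - X i') := by
  classical
  intro hdvd
  have key : ∃ v : Fin n → ℤ, v i = v j ∧ v j' - v i' = 1 := by
    by_cases h1 : j = j'
    · have hii' : i ≠ i' := fun he => hne (by rw [he, h1])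
      refine ⟨fun m => if m = i' then 0 else 1, ?_, ?_⟩
      · simp [hii', (h1 ▸ hij'.ne' : j ≠ i')]
      · simp [hij'.ne']
    · by_cases h2 : i = j'
      · refine ⟨fun m => if m = j' ∨ m = j then 1 else 0, ?_, ?_⟩
        · simp [h2]
        · have hi'j : i' ≠ j := by
            intro he
            rw [← h2] at hij'
            exact absurd (he ▸ hij') (lt_asymm hij)
          simp [hij'.ne, hij'.ne', hi'j]
      · refine ⟨fun m => if m = j' then 1 else 0, ?_, ?_⟩
        · simp [h1, h2]
        · simp [hij'.ne, hij'.ne']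
  obtain ⟨v, hv1, hv2⟩ := key
  have h3 : (eval v) (X j - X i) ∣ (eval v) (X j' - X i') := map_dvd _ hdvd
  simp only [map_sub, eval_X] at h3
  rw [hv1, sub_self, hv2] at h3
  exact one_ne_zero (zero_dvd_iff.mp h3)

lemma prod_dvd_of_dvd {n : ℕ} {s : Finset (Fin n × Fin n)} (hs : ∀ p ∈ s, p.1 < p.2)
    {a : MvPolynomial (Fin n) ℤ}
    (h : ∀ p ∈ s, (X p.2 - X p.1 : MvPolynomial (Fin n) ℤ) ∣ a) :
    (∏ p ∈ s, (X p.2 - X p.1 : MvPolynomial (Fin n) ℤ)) ∣ a := by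
  classical
  induction s using Finset.induction with
  | empty => simpa using one_dvd a
  | @insert p s hp ih =>
    have hps : p.1 < p.2 := hs p (mem_insert_self _ _)
    have hq : Prime (X p.2 - X p.1 : MvPolynomial (Fin n) ℤ) :=
      prime_X_sub_X (ne_of_lt hps)
    obtain ⟨b, hb⟩ := ih (fun r hr => hs r (mem_insert_of_mem hr))
      (fun r hr => h r (mem_insert_of_mem hr))
    have hd : (X p.2 - X p.1 : MvPolynomial (Fin n) ℤ) ∣
        (∏ r ∈ s, (X r.2 - X r.1 : MvPolynomial (Fin n) ℤ)) * b := hb ▸ h p (mem_insert_self _ _)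
    rcases hq.dvd_mul.mp hd with hd1 | hd1
    · exfalso
      obtain ⟨r, hr, hdr⟩ := (hq.dvd_finset_prod_iff _).mp hd1
      exact not_dvd_X_sub_X hps (hs r (mem_insert_of_mem hr))
        (fun he => hp (by
          have hpr : p = r := by
            rw [← Prod.mk.eta (p := p), ← Prod.mk.eta (p := r)]; exact he
          exact hpr ▸ hr)) hdr
    · obtain ⟨b', hb'⟩ := hd1
      rw [prod_insert hp]
      exact ⟨b', by rw [hb, hb']; ring⟩

lemma ones_comp_equiv {n : ℕ} (l : Fin n → Bool) (e : Equiv.Perm (Fin n)) :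
    ones n (l ∘ e) = ones n l := by
  unfold _root_.ones
  apply Finset.card_bij' (fun i _ => e i) (fun i _ => e.symm i)
  · intro a ha
    simp only [mem_filter, mem_univ, true_and, Function.comp_apply] at ha ⊢
    exact ha
  · intro a ha
    simp only [mem_filter, mem_univ, true_and, Function.comp_apply] at ha ⊢
    rw [e.apply_symm_apply]
    exact ha
  · intro a _
    simp
  · intro a _
    simp

lemma domLE_swap {n : ℕ} {l : Fin n → Bool} {i j : Fin n} (hij : i < j)
    (hi : l i = true) (hj : l j = false) : domLE n (l ∘ Equiv.swap i j) l := by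
  intro j'
  unfold _root_.psum
  apply Finset.card_le_card_of_injOn (fun p => Equiv.swap i j p)
  · intro p hp
    simp only [Finset.mem_coe, mem_filter, mem_univ, true_and, Function.comp_apply] at hp ⊢
    refine ⟨?_, hp.2⟩
    by_cases hpi : p = i
    · exfalso
      subst hpi
      rw [Equiv.swap_apply_left, hj] at hp
      exact absurd hp.2 (by simp)
    by_cases hpj : p = j
    · subst hpj
      rw [Equiv.swap_apply_right]
      exact lt_trans hij hp.1
    · rw [Equiv.swap_apply_of_ne_of_ne hpi hpj]
      exact hp.1
  · intro a _ b _ hab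
    exact (Equiv.swap i j).injective hab

lemma comp_swap_ne {n : ℕ} {l : Fin n → Bool} {i j : Fin n}
    (hi : l i = true) (hj : l j = false) : l ∘ Equiv.swap i j ≠ l := by
  intro h
  have h2 := congrFun h i
  rw [Function.comp_apply, Equiv.swap_apply_left, hj, hi] at h2
  exact absurd h2 (by simp)

lemma gkm_dvd {n k : ℕ} {α : (Fin n → Bool) → MvPolynomial (Fin n) ℤ} (hα : IsGKM n k α)
    {l : Fin n → Bool} (hl : ones n l = k)
    (hzero : ∀ m : Fin n → Bool, ones n m = k → domLE n m l → m ≠ l → α m = 0) :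
    invProd n l ∣ α l := by
  apply prod_dvd_of_dvd
  · intro p hp
    exact ((mem_filter.mp hp).2).1
  · intro p hp
    obtain ⟨hplt, hp1, hp2⟩ := (mem_filter.mp hp).2
    have h1 : ones n (l ∘ Equiv.swap p.1 p.2) = k := by rw [ones_comp_equiv]; exact hl
    have h2 : domLE n (l ∘ Equiv.swap p.1 p.2) l := domLE_swap hplt hp1 hp2
    have h3 : l ∘ Equiv.swap p.1 p.2 ≠ l := comp_swap_ne hp1 hp2
    have h4 := hα l hl p.1 p.2
    rw [hzero _ h1 h2 h3, sub_zero] at h4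
    rw [show (X p.2 - X p.1 : MvPolynomial (Fin n) ℤ) = -(X p.1 - X p.2) from (neg_sub _ _).symm]
    exact neg_dvd.mpr h4

lemma invProd_ne_zero {n : ℕ} (l : Fin n → Bool) : invProd n l ≠ 0 := by
  unfold _root_.invProd
  rw [Finset.prod_ne_zero_iff]
  intro p hp
  exact (prime_X_sub_X (ne_of_lt ((mem_filter.mp hp).2).1)).ne_zero

lemma existence {n k : ℕ} (S : (Fin n → Bool) → (Fin n → Bool) → MvPolynomial (Fin n) ℤ)
    (hS : IsSchubertFamily n k S)
    (u : Finset {l : Fin n → Bool // ones n l = k}) :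
    ∀ α : (Fin n → Bool) → MvPolynomial (Fin n) ℤ, IsGKM n k α →
    (∀ m : {l : Fin n → Bool // ones n l = k},
      (∃ μ : {l : Fin n → Bool // ones n l = k}, α μ.val ≠ 0 ∧ domLE n μ.val m.val) → m ∈ u) →
    ∃ c : {l : Fin n → Bool // ones n l = k} → MvPolynomial (Fin n) ℤ,
      (∀ m : {l : Fin n → Bool // ones n l = k},
        α m.val = ∑ lam : {l : Fin n → Bool // ones n l = k}, c lam * S lam.val m.val) ∧
      (∀ lam, c lam ≠ 0 →
        ∃ μ : {l : Fin n → Bool // ones n l = k}, α μ.val ≠ 0 ∧ domLE n μ.val lam.val) := by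
  classical
  induction u using Finset.strongInduction with
  | _ u ih =>
    intro α hα hU
    by_cases hsupp : ∀ m : {l : Fin n → Bool // ones n l = k}, α m.val = 0
    · refine ⟨0, fun m => by simp [hsupp m], fun lam h => absurd rfl h⟩
    · push_neg at hsupp
      set sp : Finset {l : Fin n → Bool // ones n l = k} :=
        Finset.univ.filter (fun m => α m.val ≠ 0) with hsp
      have hspne : sp.Nonempty := by
        obtain ⟨m, hm⟩ := hsupp
        exact ⟨m, mem_filter.mpr ⟨mem_univ _, hm⟩⟩
      obtain ⟨lam0, hl0mem, hl0min⟩ := exists_min sp.card sp le_rfl hspne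
      have hαl0 : α lam0.val ≠ 0 := (mem_filter.mp hl0mem).2
      have hz : ∀ m : Fin n → Bool, ones n m = k → domLE n m lam0.val → m ≠ lam0.val →
          α m = 0 := by
        intro m hm hle hne
        by_contra h0
        have hmem : (⟨m, hm⟩ : {l : Fin n → Bool // ones n l = k}) ∈ sp :=
          mem_filter.mpr ⟨mem_univ _, h0⟩
        exact hne (congrArg Subtype.val (hl0min ⟨m, hm⟩ hmem hle))
      obtain ⟨q, hq⟩ := gkm_dvd hα lam0.2 hz
      set β : (Fin n → Bool) → MvPolynomial (Fin n) ℤ :=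
        fun m => α m - q * S lam0.val m with hβdef
      obtain ⟨hS1, hS2, hS3, _⟩ := hS lam0.val lam0.2
      have hβ : IsGKM n k β := by
        intro l hl i j
        have e : β l - β (l ∘ Equiv.swap i j)
            = (α l - α (l ∘ Equiv.swap i j))
              - q * (S lam0.val l - S lam0.val (l ∘ Equiv.swap i j)) := by
          simp only [hβdef]; ring
        rw [e]
        exact dvd_sub (hα l hl i j) (Dvd.dvd.mul_left (hS1 l hl i j) q)
      have hβl0 : β lam0.val = 0 := by
        simp only [hβdef, hS3, hq]
        ring
      have hkey : ∀ μ : {l : Fin n → Bool // ones n l = k}, β μ.val ≠ 0 →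
          ∃ μ' : {l : Fin n → Bool // ones n l = k}, α μ'.val ≠ 0 ∧ domLE n μ'.val μ.val := by
        intro μ hμ
        by_cases hα0 : α μ.val = 0
        · have hs0 : S lam0.val μ.val ≠ 0 := by
            intro h0
            exact hμ (by simp [hβdef, hα0, h0])
          exact ⟨lam0, hαl0, hS2 μ.val μ.2 hs0⟩
        · exact ⟨μ, hα0, domLE_refl n μ.val⟩
      have hl0u : lam0 ∈ u := hU lam0 ⟨lam0, hαl0, domLE_refl n lam0.val⟩
      have hUβ : ∀ m : {l : Fin n → Bool // ones n l = k},
          (∃ μ : {l : Fin n → Bool // ones n l = k}, β μ.val ≠ 0 ∧ domLE n μ.val m.val) →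
          m ∈ u.erase lam0 := by
        rintro m ⟨μ, hμ1, hμ2⟩
        obtain ⟨μ', hμ'1, hμ'2⟩ := hkey μ hμ1
        refine mem_erase.mpr ⟨?_, hU m ⟨μ', hμ'1, domLE_trans hμ'2 hμ2⟩⟩
        rintro rfl
        have hμ'mem : μ' ∈ sp := mem_filter.mpr ⟨mem_univ _, hμ'1⟩
        have hμ'eq : μ' = m := hl0min μ' hμ'mem (domLE_trans hμ'2 hμ2)
        have hμeq : μ = m := Subtype.ext (domLE_antisymm hμ2 (hμ'eq ▸ hμ'2))
        rw [hμeq] at hμ1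
        exact hμ1 hβl0
      obtain ⟨c', hc'1, hc'2⟩ := ih (u.erase lam0) (erase_ssubset hl0u) β hβ hUβ
      refine ⟨fun μ => c' μ + if μ = lam0 then q else 0, ?_, ?_⟩
      · intro m
        have he : ∀ lam : {l : Fin n → Bool // ones n l = k},
            (c' lam + if lam = lam0 then q else 0) * S lam.val m.val
            = c' lam * S lam.val m.val + (if lam = lam0 then q * S lam.val m.val else 0) := by
          intro lam
          by_cases h : lam = lam0 <;> simp [h, add_mul]
        calc α m.val = β m.val + q * S lam0.val m.val := by simp [hβdef]
          _ = (∑ lam : {l : Fin n → Bool // ones n l = k}, c' lam * S lam.val m.val)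
              + q * S lam0.val m.val := by rw [hc'1 m]
          _ = ∑ lam : {l : Fin n → Bool // ones n l = k},
              (c' lam + if lam = lam0 then q else 0) * S lam.val m.val := by
            rw [Finset.sum_congr rfl (fun lam _ => he lam), Finset.sum_add_distrib,
              Finset.sum_ite_eq' Finset.univ lam0 (fun lam => q * S lam.val m.val),
              if_pos (mem_univ _)]
      · intro lam hlam
        by_cases h : lam = lam0
        · subst h
          exact ⟨lam, hαl0, domLE_refl n lam.val⟩
        · have hc'ne : c' lam ≠ 0 := by simpa [h] using hlam
          obtain ⟨μ, hμ1, hμ2⟩ := hc'2 lam hc'ne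
          obtain ⟨μ', hμ'1, hμ'2⟩ := hkey μ hμ1
          exact ⟨μ', hμ'1, domLE_trans hμ'2 hμ2⟩

lemma uniq {n k : ℕ} (S : (Fin n → Bool) → (Fin n → Bool) → MvPolynomial (Fin n) ℤ)
    (hS : IsSchubertFamily n k S)
    (c c' : {l : Fin n → Bool // ones n l = k} → MvPolynomial (Fin n) ℤ)
    (h : ∀ m : {l : Fin n → Bool // ones n l = k},
      ∑ lam : {l : Fin n → Bool // ones n l = k}, c lam * S lam.val m.val
        = ∑ lam : {l : Fin n → Bool // ones n l = k}, c' lam * S lam.val m.val) : c = c' := by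
  classical
  by_contra hne
  have hd : ∃ lam, c lam - c' lam ≠ 0 := by
    by_contra hall
    push_neg at hall
    exact hne (funext fun lam => sub_eq_zero.mp (hall lam))
  set sp : Finset {l : Fin n → Bool // ones n l = k} :=
    Finset.univ.filter (fun lam => c lam - c' lam ≠ 0) with hsp
  have hspne : sp.Nonempty := by
    obtain ⟨lam, hlam⟩ := hd
    exact ⟨lam, mem_filter.mpr ⟨mem_univ _, hlam⟩⟩
  obtain ⟨lam0, hl0mem, hl0min⟩ := exists_min sp.card sp le_rfl hspne
  have hl0 : c lam0 - c' lam0 ≠ 0 := (mem_filter.mp hl0mem).2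
  have hsum : ∑ lam : {l : Fin n → Bool // ones n l = k},
      (c lam - c' lam) * S lam.val lam0.val = 0 := by
    simp only [sub_mul]
    rw [Finset.sum_sub_distrib, h lam0, sub_self]
  rw [Finset.sum_eq_single lam0] at hsum
  · obtain ⟨_, hS2, hS3, _⟩ := hS lam0.val lam0.2
    rw [hS3] at hsum
    rcases mul_eq_zero.mp hsum with h0 | h0
    · exact hl0 h0
    · exact invProd_ne_zero lam0.val h0
  · intro b _ hbne
    by_cases hb : c b - c' b = 0
    · rw [hb, zero_mul]
    · obtain ⟨_, hS2, _, _⟩ := hS b.val b.2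
      by_cases hsb : S b.val lam0.val = 0
      · rw [hsb, mul_zero]
      · exact absurd (hl0min b (mem_filter.mpr ⟨mem_univ _, hb⟩)
          (hS2 lam0.val lam0.2 hsb)) hbne
  · intro hmem
    exact absurd (mem_univ lam0) hmem

end AuxLemmas

/-- the equivariant Schubert classes form a free-module basis of
the GKM classes over `ℤ[y₁,…,yₙ]`: every GKM class has a unique expansion, and
the expansion of `α` uses only `λ` lying above some element of the support of
`α`. -/
theorem stmt9 (n k : ℕ) (hk : k ≤ n)
    (S : (Fin n → Bool) → (Fin n → Bool) → MvPolynomial (Fin n) ℤ)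
    (hS : IsSchubertFamily n k S) :
    (∀ α, IsGKM n k α →
      ∃! c : {l : Fin n → Bool // ones n l = k} → MvPolynomial (Fin n) ℤ,
        ∀ m, ones n m = k →
          α m = ∑ lam : {l : Fin n → Bool // ones n l = k}, c lam * S lam.val m) ∧
    (∀ α, IsGKM n k α →
      ∀ c : {l : Fin n → Bool // ones n l = k} → MvPolynomial (Fin n) ℤ,
        (∀ m, ones n m = k →
          α m = ∑ lam : {l : Fin n → Bool // ones n l = k}, c lam * S lam.val m) →
        ∀ lam, c lam ≠ 0 →
          ∃ m : Fin n → Bool, ones n m = k ∧ α m ≠ 0 ∧ domLE n m lam.val) := by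
  classical
  have main : ∀ α : (Fin n → Bool) → MvPolynomial (Fin n) ℤ, IsGKM n k α →
      ∃ c : {l : Fin n → Bool // ones n l = k} → MvPolynomial (Fin n) ℤ,
        (∀ m : {l : Fin n → Bool // ones n l = k},
          α m.val = ∑ lam : {l : Fin n → Bool // ones n l = k}, c lam * S lam.val m.val) ∧
        (∀ lam, c lam ≠ 0 →
          ∃ μ : {l : Fin n → Bool // ones n l = k}, α μ.val ≠ 0 ∧ domLE n μ.val lam.val) :=
    fun α hα => existence S hS Finset.univ α hα (fun m _ => Finset.mem_univ m)
  constructor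
  · intro α hα
    obtain ⟨c, hc1, hc2⟩ := main α hα
    refine ⟨c, fun m hm => hc1 ⟨m, hm⟩, ?_⟩
    intro c' hc'
    exact uniq S hS c' c (fun m => by rw [← hc' m.val m.2]; exact hc1 m)
  · intro α hα c hc lam hlam
    obtain ⟨c0, hc01, hc02⟩ := main α hα
    have hcc : c = c0 := uniq S hS c c0 (fun m => by rw [← hc m.val m.2]; exact hc01 m)
    obtain ⟨μ, hμ1, hμ2⟩ := hc02 lam (hcc ▸ hlam)
    exact ⟨μ.val, μ.2, hμ1, hμ2⟩
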